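/- Let X be a Hausdorff topological vector space over ℝ, let T be a continuous linear operator on X, let A be a filter of subsets of ℕ, and let Z ⊆ X be a set with 0 ∈ Z, with the linear span of Z dense in X, and with T(Z) ⊆ Z. If for all nonempty relatively open sets U_0, U_1 ⊆ Z the set { m ∈ ℕ : U_0 ∩ T⁻ᵐ(U_1) ∩ Z ≠ ∅ } belongs to A, then for all nonempty open sets V_0, V_1 ⊆ X the set { m ∈ ℕ : V_0 ∩ T⁻ᵐ(V_1) ≠ ∅ } belongs to A. -/

import Mathlib

/-- Auxiliary: a filter-like family is closed under finite intersections with a base set. -/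
lemma finite_inter_mem {𝒜 : Set (Set ℕ)}
    (hCap : ∀ A B : Set ℕ, A ∈ 𝒜 → B ∈ 𝒜 → A ∩ B ∈ 𝒜)
    {ι : Type*} (s : Finset ι) (f : ι → Set ℕ) (base : Set ℕ)
    (hb : base ∈ 𝒜) (hf : ∀ i ∈ s, f i ∈ 𝒜) :
    (base ∩ ⋂ i ∈ s, f i) ∈ 𝒜 := by
  classical
  induction s using Finset.induction_on with
  | empty => simpa using hb
  | @insert a s ha ih =>
    rw [Finset.set_biInter_insert, Set.inter_left_comm]
    exact hCap _ _ (hf a (Finset.mem_insert_self a s))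
      (ih fun i hi => hf i (Finset.mem_insert_of_mem hi))

/-- (The `N = 1` case of the inheritance theorem.)
Let `X` be a Hausdorff topological vector space over `ℝ`, `T` a continuous linear
operator on `X`, `𝒜` a filter of subsets of `ℕ`, and `Z ⊆ X` a set with `0 ∈ Z`,
with dense linear span, and invariant under `T`.  If for all nonempty relatively
open sets `U₀, U₁ ⊆ Z` (i.e. sets of the form `V ∩ Z` with `V` open in `X`) the
set `{ m : U₀ ∩ T⁻ᵐ(U₁) ∩ Z ≠ ∅ }` belongs to `𝒜`, then for all nonempty open sets
`V₀, V₁ ⊆ X` the set `{ m : V₀ ∩ T⁻ᵐ(V₁) ≠ ∅ }` belongs to `𝒜`. -/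
theorem stmt_2 {X : Type*} [AddCommGroup X] [Module ℝ X] [TopologicalSpace X]
    [IsTopologicalAddGroup X] [ContinuousSMul ℝ X] [T2Space X]
    (T : X →L[ℝ] X)
    (𝒜 : Set (Set ℕ))
    (hInf : ∀ A ∈ 𝒜, A.Infinite)
    (hUp : ∀ A B : Set ℕ, A ∈ 𝒜 → A ⊆ B → B ∈ 𝒜)
    (hCap : ∀ A B : Set ℕ, A ∈ 𝒜 → B ∈ 𝒜 → A ∩ B ∈ 𝒜)
    (Z : Set X) (h0 : (0 : X) ∈ Z)
    (hdense : Dense (Submodule.span ℝ Z : Set X))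
    (hinv : Set.MapsTo T Z Z)
    (hZtrans : ∀ V0 V1 : Set X, IsOpen V0 → (V0 ∩ Z).Nonempty →
        IsOpen V1 → (V1 ∩ Z).Nonempty →
        {m : ℕ | ((V0 ∩ Z) ∩ (⇑T)^[m] ⁻¹' (V1 ∩ Z)).Nonempty} ∈ 𝒜) :
    ∀ V0 V1 : Set X, IsOpen V0 → V0.Nonempty → IsOpen V1 → V1.Nonempty →
        {m : ℕ | (V0 ∩ (⇑T)^[m] ⁻¹' V1).Nonempty} ∈ 𝒜 := by
  classical
  intro V0 V1 hV0o hV0ne hV1o hV1ne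
  have hZuniv : ((Set.univ : Set X) ∩ Z).Nonempty := ⟨0, trivial, h0⟩
  have hbase := hZtrans Set.univ Set.univ isOpen_univ hZuniv isOpen_univ hZuniv
  obtain ⟨x0, hx0span, hx0V⟩ := hdense.exists_mem_open hV0o hV0ne
  obtain ⟨x1, hx1span, hx1V⟩ := hdense.exists_mem_open hV1o hV1ne
  rw [SetLike.mem_coe, Submodule.mem_span_set'] at hx0span hx1span
  obtain ⟨n, a, g0, hg0⟩ := hx0span
  obtain ⟨k, b, g1, hg1⟩ := hx1span
  let c : Fin n ⊕ Fin k → ℝ := Sum.elim a b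
  let F : ((Fin n ⊕ Fin k) → X) → X := fun p => ∑ i, c i • p i
  have hF : Continuous F :=
    continuous_finset_sum _ fun i _ => (continuous_apply i).const_smul (c i)
  let p0 : (Fin n ⊕ Fin k) → X := Sum.elim (fun i => (g0 i : X)) (fun _ => 0)
  let p1 : (Fin n ⊕ Fin k) → X := Sum.elim (fun _ => 0) (fun j => (g1 j : X))
  have hp0 : F p0 = x0 := by
    simp only [F, p0, c, Fintype.sum_sum_type, Sum.elim_inl, Sum.elim_inr, smul_zero,
      Finset.sum_const_zero, add_zero]
    exact hg0
  have hp1 : F p1 = x1 := by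
    simp only [F, p1, c, Fintype.sum_sum_type, Sum.elim_inl, Sum.elim_inr, smul_zero,
      Finset.sum_const_zero, zero_add]
    exact hg1
  have hp0Z : ∀ i, p0 i ∈ Z := by
    rintro (i | j)
    · exact (g0 i).2
    · exact h0
  have hp1Z : ∀ i, p1 i ∈ Z := by
    rintro (i | j)
    · exact h0
    · exact (g1 j).2
  -- neighborhoods
  obtain ⟨I0, u0, hu0, hsub0⟩ := isOpen_pi_iff.mp (hV0o.preimage hF) p0
    (by rw [Set.mem_preimage, hp0]; exact hx0V)
  obtain ⟨I1, u1, hu1, hsub1⟩ := isOpen_pi_iff.mp (hV1o.preimage hF) p1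
    (by rw [Set.mem_preimage, hp1]; exact hx1V)
  let U0 : (Fin n ⊕ Fin k) → Set X := fun i => if i ∈ I0 then u0 i else Set.univ
  let U1 : (Fin n ⊕ Fin k) → Set X := fun i => if i ∈ I1 then u1 i else Set.univ
  have hU0o : ∀ i, IsOpen (U0 i) := by
    intro i; by_cases h : i ∈ I0 <;> simp only [U0, h, if_true, if_false]
    · exact (hu0 i h).1
    · exact isOpen_univ
  have hU1o : ∀ i, IsOpen (U1 i) := by
    intro i; by_cases h : i ∈ I1 <;> simp only [U1, h, if_true, if_false]
    · exact (hu1 i h).1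
    · exact isOpen_univ
  have hU0m : ∀ i, p0 i ∈ U0 i := by
    intro i; by_cases h : i ∈ I0 <;> simp only [U0, h, if_true, if_false]
    · exact (hu0 i h).2
    · trivial
  have hU1m : ∀ i, p1 i ∈ U1 i := by
    intro i; by_cases h : i ∈ I1 <;> simp only [U1, h, if_true, if_false]
    · exact (hu1 i h).2
    · trivial
  have hU0sub : ∀ p : (Fin n ⊕ Fin k) → X, (∀ i, p i ∈ U0 i) → F p ∈ V0 := by
    intro p hp
    refine hsub0 fun i hi => ?_
    have := hp i
    simp only [U0, Finset.mem_coe.mp hi, if_true] at this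
    exact this
  have hU1sub : ∀ p : (Fin n ⊕ Fin k) → X, (∀ i, p i ∈ U1 i) → F p ∈ V1 := by
    intro p hp
    refine hsub1 fun i hi => ?_
    have := hp i
    simp only [U1, Finset.mem_coe.mp hi, if_true] at this
    exact this
  -- the 𝒜-sets
  let A : (Fin n ⊕ Fin k) → Set ℕ :=
    fun i => {m : ℕ | ((U0 i ∩ Z) ∩ (⇑T)^[m] ⁻¹' (U1 i ∩ Z)).Nonempty}
  have hA : ∀ i, A i ∈ 𝒜 := fun i =>
    hZtrans (U0 i) (U1 i) (hU0o i) ⟨p0 i, hU0m i, hp0Z i⟩ (hU1o i) ⟨p1 i, hU1m i, hp1Z i⟩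
  have hS : ({m | ((Set.univ ∩ Z) ∩ (⇑T)^[m] ⁻¹' (Set.univ ∩ Z)).Nonempty} ∩
      ⋂ i ∈ (Finset.univ : Finset (Fin n ⊕ Fin k)), A i) ∈ 𝒜 :=
    finite_inter_mem hCap Finset.univ A _ hbase (fun i _ => hA i)
  refine hUp _ _ hS ?_
  rintro m ⟨-, hm⟩
  simp only [Set.mem_iInter] at hm
  have hq : ∀ i : Fin n ⊕ Fin k, ∃ x, (x ∈ U0 i ∧ x ∈ Z) ∧ ((⇑T)^[m] x ∈ U1 i ∧ (⇑T)^[m] x ∈ Z) := by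
    intro i
    obtain ⟨x, hx1, hx2⟩ := hm i (Finset.mem_univ i)
    exact ⟨x, hx1, hx2⟩
  choose q hq0 hq1 using hq
  have hTm : (⇑T)^[m] (F q) = F (fun i => (⇑T)^[m] (q i)) := by
    rw [← FunLike.coe_pow_eq_iterate]
    simp only [F, map_sum, ContinuousLinearMap.map_smul]
  exact ⟨F q, hU0sub q fun i => (hq0 i).1, by
    rw [Set.mem_preimage, hTm]; exact hU1sub _ fun i => (hq1 i).1⟩
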